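/- Let I be a DG Poisson ideal of R, A = R/I, and A^e = F(R)/J with the maps m : A -> A^e, m(f + I) = f + J, and h : A -> A^e, h(f + I) = ψ(f) + J; write a for m(a) and y_i for the image of y_i in A^e. Then for every i in {1,...,n} and every homogeneous f in A, the following hold in A^e: (a) y_i f = (-1)^{|x_i||f|} f y_i + {x_i, f}; (b) h(f) x_i = (-1)^{|x_i||f|} x_i h(f) + {f, x_i}; (c) y_i h(f) = (-1)^{|x_i||f|} h(f) y_i + h({x_i, f}). -/

import Mathlib

noncomputable section

open scoped DirectSum

/-- The sign `(-1)^m`, as an integer, for `m : ℤ`. -/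
def sgn (m : ℤ) : ℤ := (Int.negOnePow m : ℤ)

/-- A differential graded Poisson algebra structure on a `ℤ`-graded `k`-algebra `A`,
whose grading is given by `𝒜`. -/
structure DGPoissonAlgebra (k : Type) [Field k] (A : Type) [Ring A] [Algebra k A]
    (𝒜 : ℤ → Submodule k A) : Type where
  /-- the Poisson bracket -/
  br : A →ₗ[k] A →ₗ[k] A
  /-- the differential -/
  d : A →ₗ[k] A
  br_mem : ∀ ⦃i j : ℤ⦄ ⦃a b : A⦄, a ∈ 𝒜 i → b ∈ 𝒜 j → br a b ∈ 𝒜 (i + j)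
  d_mem : ∀ ⦃i : ℤ⦄ ⦃a : A⦄, a ∈ 𝒜 i → d a ∈ 𝒜 (i + 1)
  antisymm : ∀ ⦃i j : ℤ⦄ ⦃a b : A⦄, a ∈ 𝒜 i → b ∈ 𝒜 j →
    br a b = -(sgn (i * j) • br b a)
  jacobi : ∀ ⦃i j l : ℤ⦄ ⦃a b c : A⦄, a ∈ 𝒜 i → b ∈ 𝒜 j → c ∈ 𝒜 l →
    br a (br b c) = br (br a b) c + sgn (i * j) • br b (br a c)
  gcomm : ∀ ⦃i j : ℤ⦄ ⦃a b : A⦄, a ∈ 𝒜 i → b ∈ 𝒜 j → a * b = sgn (i * j) • (b * a)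
  leibniz : ∀ ⦃i j l : ℤ⦄ ⦃a b c : A⦄, a ∈ 𝒜 i → b ∈ 𝒜 j → c ∈ 𝒜 l →
    br a (b * c) = br a b * c + sgn (i * j) • (b * br a c)
  d_sq : ∀ a : A, d (d a) = 0
  d_br : ∀ ⦃i j : ℤ⦄ ⦃a b : A⦄, a ∈ 𝒜 i → b ∈ 𝒜 j →
    d (br a b) = br (d a) b + sgn i • br a (d b)
  d_mul : ∀ ⦃i j : ℤ⦄ ⦃a b : A⦄, a ∈ 𝒜 i → b ∈ 𝒜 j →
    d (a * b) = d a * b + sgn i • (a * d b)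

/-- A differential graded algebra structure (i.e. a differential) on a `ℤ`-graded
`k`-algebra `B` with grading `ℬ`. -/
structure DGAlgebra (k : Type) [Field k] (B : Type) [Ring B] [Algebra k B]
    (ℬ : ℤ → Submodule k B) : Type where
  /-- the differential -/
  d : B →ₗ[k] B
  d_mem : ∀ ⦃i : ℤ⦄ ⦃b : B⦄, b ∈ ℬ i → d b ∈ ℬ (i + 1)
  d_sq : ∀ b : B, d (d b) = 0
  d_mul : ∀ ⦃i j : ℤ⦄ ⦃a b : B⦄, a ∈ ℬ i → b ∈ ℬ j →
    d (a * b) = d a * b + sgn i • (a * d b)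

/-- `f` is a DG algebra map: a degree-`0` algebra map commuting with the differentials. -/
structure IsDGAlgebraMap (k : Type) [Field k] {A B : Type} [Ring A] [Algebra k A]
    [Ring B] [Algebra k B] (𝒜 : ℤ → Submodule k A) (ℬ : ℤ → Submodule k B)
    (dA : A →ₗ[k] A) (dB : B →ₗ[k] B) (f : A →ₐ[k] B) : Prop where
  map_mem : ∀ ⦃i : ℤ⦄ ⦃a : A⦄, a ∈ 𝒜 i → f a ∈ ℬ i
  map_d : ∀ a : A, f (dA a) = dB (f a)

/-- The compatibility conditions satisfied by a pair `(f, g)` from a DG Poisson algebra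
`A` to a DG algebra `B`: `f` is a DG algebra map, `g` is a degree-`0` `k`-linear map
commuting with the differentials which is a graded Lie algebra map into `B` with the
graded commutator, and the two mixed identities hold. -/
def UEACompat (k : Type) [Field k] {A B : Type} [Ring A] [Algebra k A]
    [Ring B] [Algebra k B] (𝒜 : ℤ → Submodule k A) (ℬ : ℤ → Submodule k B)
    (P : DGPoissonAlgebra k A 𝒜) (dB : B →ₗ[k] B)
    (f : A →ₐ[k] B) (g : A →ₗ[k] B) : Prop :=
  IsDGAlgebraMap k 𝒜 ℬ P.d dB f ∧
  (∀ ⦃i : ℤ⦄ ⦃a : A⦄, a ∈ 𝒜 i → g a ∈ ℬ i) ∧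
  (∀ a : A, g (P.d a) = dB (g a)) ∧
  (∀ ⦃i j : ℤ⦄ ⦃a b : A⦄, a ∈ 𝒜 i → b ∈ 𝒜 j →
    g (P.br a b) = g a * g b - sgn (i * j) • (g b * g a)) ∧
  (∀ ⦃i j : ℤ⦄ ⦃a b : A⦄, a ∈ 𝒜 i → b ∈ 𝒜 j →
    f (P.br a b) = g a * f b - sgn (i * j) • (f b * g a)) ∧
  (∀ ⦃i j : ℤ⦄ ⦃a b : A⦄, a ∈ 𝒜 i → b ∈ 𝒜 j →
    g (a * b) = f a * g b + sgn (i * j) • (f b * g a))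

/-- `(E, α, β)` is a universal enveloping algebra of the DG Poisson algebra `A`. -/
def IsUEA (k : Type) [Field k] {A E : Type} [Ring A] [Algebra k A] [Ring E] [Algebra k E]
    (𝒜 : ℤ → Submodule k A) (ℰ : ℤ → Submodule k E)
    (P : DGPoissonAlgebra k A 𝒜) (DE : DGAlgebra k E ℰ)
    (α : A →ₐ[k] E) (β : A →ₗ[k] E) : Prop :=
  UEACompat k 𝒜 ℰ P DE.d α β ∧
  ∀ (D : Type) [Ring D] [Algebra k D] (𝒟 : ℤ → Submodule k D) [GradedAlgebra 𝒟]
    (dD : DGAlgebra k D 𝒟) (f : A →ₐ[k] D) (g : A →ₗ[k] D),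
    UEACompat k 𝒜 𝒟 P dD.d f g →
    ∃! φ : E →ₐ[k] D, IsDGAlgebraMap k ℰ 𝒟 DE.d dD.d φ ∧
      φ.comp α = f ∧ φ.toLinearMap.comp β = g

/-- The two-sided ideal of `F` generated by a set `S`, as a `k`-submodule. -/
def idealGen (k : Type) [Field k] {F : Type} [Ring F] [Algebra k F] (S : Set F) :
    Submodule k F :=
  Submodule.span k {z : F | ∃ u v : F, ∃ s ∈ S, z = u * s * v}

/-- The left ideal of `F` generated by a set `S`, as a `k`-submodule. -/
def leftIdealGen (k : Type) [Field k] {F : Type} [Ring F] [Algebra k F] (S : Set F) :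
    Submodule k F :=
  Submodule.span k {z : F | ∃ u : F, ∃ s ∈ S, z = u * s}

/-- A submodule is graded if it is spanned by its homogeneous elements. -/
def IsGradedSubmodule (k : Type) [Field k] {A : Type} [AddCommGroup A] [Module k A]
    (𝒜 : ℤ → Submodule k A) (M : Submodule k A) : Prop :=
  M ≤ Submodule.span k {a : A | a ∈ M ∧ ∃ i, a ∈ 𝒜 i}

/-- A `k`-submodule which is a two-sided ideal. -/
def IsTwoSidedIdealSub (k : Type) [Field k] {A : Type} [Ring A] [Algebra k A]
    (M : Submodule k A) : Prop :=
  ∀ r : A, ∀ m ∈ M, r * m ∈ M ∧ m * r ∈ M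

/-- A DG ideal: a graded two-sided ideal closed under the differential `d`. -/
def IsDGIdeal (k : Type) [Field k] {A : Type} [Ring A] [Algebra k A]
    (𝒜 : ℤ → Submodule k A) (d : A →ₗ[k] A) (M : Submodule k A) : Prop :=
  IsTwoSidedIdealSub k M ∧ IsGradedSubmodule k 𝒜 M ∧ ∀ m ∈ M, d m ∈ M

/-- A DG Poisson ideal: a DG ideal which is also closed under the Poisson bracket. -/
def IsDGPoissonIdeal (k : Type) [Field k] {A : Type} [Ring A] [Algebra k A]
    (𝒜 : ℤ → Submodule k A) (P : DGPoissonAlgebra k A 𝒜) (M : Submodule k A) : Prop :=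
  IsDGIdeal k 𝒜 P.d M ∧ ∀ a : A, ∀ m ∈ M, P.br a m ∈ M

/-- `π : A → B` presents `B` as the quotient of `A` by `I`. -/
structure IsQuotientBy (k : Type) [Field k] {A B : Type} [Ring A] [Algebra k A]
    [Ring B] [Algebra k B] (π : A →ₐ[k] B) (I : Submodule k A) : Prop where
  surj : Function.Surjective π
  ker : ∀ a : A, π a = 0 ↔ a ∈ I

/-- The (noncommutative, ordered) monomial `x 0 ^ e 0 * x 1 ^ e 1 * ⋯` . -/
def xMono {n : ℕ} {R : Type} [Ring R] (x : Fin n → R) (e : Fin n → ℕ) : R :=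
  ((List.finRange n).map fun r => x r ^ e r).prod
/-- The map `ψ : R → F(R)`, `ψ(f) = ∑_α ψ_α(f) y_α`. -/
def psiF {k R F : Type} [Field k] [Ring R] [Algebra k R] [Ring F] [Algebra k F]
    {Λ : Type} (ι : R →ₐ[k] F) (ψ : Λ → R →ₗ[k] R) (y : Λ → F) (f : R) : F :=
  ∑ᶠ α : Λ, ι (ψ α f) * y α

/-- The generators of the graded ideal `J` of `F(R)`: `I`, `ψ(I)`,
`y_i y_j - (-1)^{|x_i||x_j|} y_j y_i - ψ({x_i, x_j})` and
`y_i x_j - (-1)^{|x_i||x_j|} x_j y_i - {x_i, x_j}`. -/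
def Jgens {k R F : Type} [Field k] [Ring R] [Algebra k R] [Ring F] [Algebra k F]
    {Λ : Type} (𝒜 : ℤ → Submodule k R) (P : DGPoissonAlgebra k R 𝒜)
    (x : Λ → R) (w : Λ → ℤ) (ι : R →ₐ[k] F) (ψ : Λ → R →ₗ[k] R) (y : Λ → F)
    (I : Submodule k R) : Set F :=
  (⇑ι '' (I : Set R)) ∪ (psiF ι ψ y '' (I : Set R)) ∪
  {z | ∃ α β, z = y α * y β - sgn (w α * w β) • (y β * y α)
      - psiF ι ψ y (P.br (x α) (x β))} ∪
  {z | ∃ α β, z = y α * ι (x β) - sgn (w α * w β) • (ι (x β) * y α)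
      - ι (P.br (x α) (x β))}

lemma sgn_zero : sgn 0 = 1 := rfl

lemma sgn_add (m n : ℤ) : sgn (m + n) = sgn m * sgn n := by
  simp [sgn, Int.negOnePow_add]

lemma sgn_even {m : ℤ} (h : Even m) : sgn m = 1 := by
  simp [sgn, Int.negOnePow_even _ h]

lemma sgn_eq_sgn {m n : ℤ} (h : Even (m - n)) : sgn m = sgn n := by
  unfold sgn
  exact congrArg Units.val ((Int.negOnePow_eq_iff m n).2 h)

lemma sgn_smul_smul {M : Type*} [AddCommGroup M] (m n : ℤ) (a : M) :
    sgn m • sgn n • a = sgn (m + n) • a := by rw [smul_smul, ← sgn_add]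

lemma sgn_smul_cancel {M : Type*} [AddCommGroup M] (m : ℤ) (a : M) :
    sgn m • sgn m • a = a := by
  rw [sgn_smul_smul, sgn_even ⟨m, rfl⟩, one_smul]

/-- sign-twist linear map -/
def tw (k : Type) [Field k] {R : Type} [Ring R] [Algebra k R] (𝒜 : ℤ → Submodule k R)
    [GradedAlgebra 𝒜] (c : ℤ → ℤ) : R →ₗ[k] R :=
  (DirectSum.toModule k ℤ R fun l => sgn (c l) • (𝒜 l).subtype).comp
    (DirectSum.decomposeLinearEquiv 𝒜).toLinearMap

lemma tw_of_mem (k : Type) [Field k] {R : Type} [Ring R] [Algebra k R]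
    (𝒜 : ℤ → Submodule k R) [GradedAlgebra 𝒜] (c : ℤ → ℤ) {l : ℤ} {r : R}
    (hr : r ∈ 𝒜 l) : tw k 𝒜 c r = sgn (c l) • r := by
  simp only [tw, LinearMap.comp_apply, LinearEquiv.coe_coe,
    DirectSum.decomposeLinearEquiv_apply, DirectSum.decompose_of_mem 𝒜 hr,
    ← DirectSum.lof_eq_of k, DirectSum.toModule_lof]
  rfl

set_option linter.unusedSectionVars false

section Main

variable {k R F C : Type} [Field k] [Ring R] [Algebra k R] [Ring F] [Algebra k F]
  [Ring C] [Algebra k C]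
variable {n : ℕ} {𝒜 : ℤ → Submodule k R} [GradedAlgebra 𝒜]
variable {x : Fin n → R} {w : Fin n → ℤ}

lemma monomial_mem (hx : ∀ i, x i ∈ 𝒜 (w i)) :
    ∀ L : List (Fin n), (L.map x).prod ∈ 𝒜 (L.map w).sum := by
  intro L
  induction L with
  | nil => simpa using SetLike.one_mem_graded 𝒜
  | cons j t ih => simpa using SetLike.mul_mem_graded (hx j) ih

lemma monomial_span (hgen : Algebra.adjoin k (Set.range x) = ⊤) (p : R → Prop)
    (h0 : p 0) (hadd : ∀ a b, p a → p b → p (a + b))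
    (hsmul : ∀ (c : k) (a), p a → p (c • a))
    (hmon : ∀ L : List (Fin n), p ((L.map x).prod)) (r : R) : p r := by
  have hr : r ∈ Submodule.span k (↑(Submonoid.closure (Set.range x)) : Set R) := by
    have := Algebra.adjoin_eq_span k (Set.range x)
    rw [hgen] at this
    rw [← this, Algebra.top_toSubmodule]
    exact Submodule.mem_top
  refine Submodule.span_induction ?_ h0 (fun a b _ _ ha hb => hadd a b ha hb)
    (fun c a _ ha => hsmul c a ha) hr
  intro z hz
  have key : ∀ L0 : List R, (∀ u ∈ L0, u ∈ Set.range x) →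
      ∃ L : List (Fin n), L.map x = L0 := by
    intro L0
    induction L0 with
    | nil => exact fun _ => ⟨[], rfl⟩
    | cons a t ih =>
      intro hmem
      obtain ⟨j, hj⟩ := hmem a List.mem_cons_self
      obtain ⟨L, hL⟩ := ih fun u hu => hmem u (List.mem_cons_of_mem _ hu)
      exact ⟨j :: L, by simp [hL, hj]⟩
  obtain ⟨L0, hL0, rfl⟩ := Submonoid.exists_list_of_mem_closure hz
  obtain ⟨L, rfl⟩ := key L0 hL0
  exact hmon L


section PsiFL

variable (ι : R →ₐ[k] F) (ψ : Fin n → R →ₗ[k] R) (y : Fin n → F)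

lemma psiF_sum (r : R) : psiF ι ψ y r = ∑ α, ι (ψ α r) * y α :=
  finsum_eq_sum_of_fintype _

lemma psiF_add (a b : R) : psiF ι ψ y (a + b) = psiF ι ψ y a + psiF ι ψ y b := by
  simp [psiF_sum, map_add, add_mul, Finset.sum_add_distrib]

lemma psiF_zero : psiF ι ψ y 0 = 0 := by simp [psiF_sum]

lemma psiF_smul (c : k) (a : R) : psiF ι ψ y (c • a) = c • psiF ι ψ y a := by
  simp [psiF_sum, map_smul, smul_mul_assoc, Finset.smul_sum]

lemma psiF_zsmul (z : ℤ) (a : R) : psiF ι ψ y (z • a) = z • psiF ι ψ y a := by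
  rw [psiF_sum, psiF_sum, Finset.smul_sum]
  exact Finset.sum_congr rfl fun α _ => by rw [map_zsmul, map_zsmul, smul_mul_assoc]

lemma psiF_x (hψx : ∀ i, ψ i (x i) = 1) (hψx' : ∀ i j, i ≠ j → ψ i (x j) = 0) (j : Fin n) :
    psiF ι ψ y (x j) = y j := by
  rw [psiF_sum, Finset.sum_eq_single j (fun α _ hα => by rw [hψx' α j hα, map_zero, zero_mul])
    (fun hj => absurd (Finset.mem_univ j) hj), hψx j, map_one, one_mul]

variable (P : DGPoissonAlgebra k R 𝒜)

lemma psiF_mul (hψmul : ∀ (r : Fin n) ⦃i j : ℤ⦄ ⦃a b : R⦄, a ∈ 𝒜 i → b ∈ 𝒜 j →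
      ψ r (a * b) = a * ψ r b + sgn (i * j) • (b * ψ r a))
    {p q : ℤ} {a b : R} (ha : a ∈ 𝒜 p) (hb : b ∈ 𝒜 q) :
    psiF ι ψ y (a * b) = ι a * psiF ι ψ y b + sgn (p * q) • (ι b * psiF ι ψ y a) := by
  rw [psiF_sum, psiF_sum, psiF_sum, Finset.mul_sum, Finset.mul_sum, Finset.smul_sum,
    ← Finset.sum_add_distrib]
  refine Finset.sum_congr rfl fun α _ => ?_
  simp [hψmul α ha hb, map_add, map_mul, map_zsmul, add_mul, smul_mul_assoc, mul_assoc]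

variable {I : Submodule k R} (πe : F →ₐ[k] C)

lemma gen_zero (hπe : IsQuotientBy k πe (idealGen k (Jgens 𝒜 P x w ι ψ y I)))
    {u : F} (hu : u ∈ Jgens 𝒜 P x w ι ψ y I) : πe u = 0 :=
  (hπe.ker u).2 (Submodule.subset_span ⟨1, 1, u, hu, by rw [one_mul, mul_one]⟩)

lemma K4L (hπe : IsQuotientBy k πe (idealGen k (Jgens 𝒜 P x w ι ψ y I))) (α β : Fin n) :
    πe (y α) * πe (ι (x β)) = sgn (w α * w β) • (πe (ι (x β)) * πe (y α))
      + πe (ι (P.br (x α) (x β))) := by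
  have hu : (y α * ι (x β) - sgn (w α * w β) • (ι (x β) * y α) - ι (P.br (x α) (x β)))
      ∈ Jgens 𝒜 P x w ι ψ y I := Or.inr ⟨α, β, rfl⟩
  have h0 := gen_zero ι ψ y P πe hπe hu
  rw [map_sub, map_sub, map_mul, map_zsmul, map_mul, sub_sub, sub_eq_zero] at h0
  exact h0

lemma K3L (hπe : IsQuotientBy k πe (idealGen k (Jgens 𝒜 P x w ι ψ y I))) (α β : Fin n) :
    πe (y α) * πe (y β) = sgn (w α * w β) • (πe (y β) * πe (y α))
      + πe (psiF ι ψ y (P.br (x α) (x β))) := by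
  have hu : (y α * y β - sgn (w α * w β) • (y β * y α) - psiF ι ψ y (P.br (x α) (x β)))
      ∈ Jgens 𝒜 P x w ι ψ y I := Or.inl (Or.inr ⟨α, β, rfl⟩)
  have h0 := gen_zero ι ψ y P πe hπe hu
  rw [map_sub, map_sub, map_mul, map_zsmul, map_mul, sub_sub, sub_eq_zero] at h0
  exact h0

end PsiFL

section BrL

variable (P : DGPoissonAlgebra k R 𝒜)

lemma br_one {p : ℤ} {a : R} (ha : a ∈ 𝒜 p) : P.br a 1 = 0 := by
  have h := P.leibniz ha (SetLike.one_mem_graded 𝒜) (SetLike.one_mem_graded 𝒜)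
  simp only [one_mul, mul_one, mul_zero, sgn_zero, one_smul] at h
  exact left_eq_add.1 h

lemma br_prod {i : Fin n} (hxi : x i ∈ 𝒜 (w i)) {p q : ℤ} {a b : R}
    (ha : a ∈ 𝒜 p) (hb : b ∈ 𝒜 q) :
    P.br (a * b) (x i) = sgn (q * w i) • (P.br a (x i) * b) + a * P.br b (x i) := by
  rw [P.antisymm (SetLike.mul_mem_graded ha hb) hxi, P.leibniz hxi ha hb,
    P.antisymm hxi ha, P.antisymm hxi hb]
  simp only [neg_mul, mul_neg, smul_neg, neg_neg, smul_add, neg_add_rev, smul_mul_assoc,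
    mul_smul_comm, smul_smul, ← sgn_add]
  rw [sgn_eq_sgn (show Even ((p + q) * w i + (w i * p + w i * q) - 0) from
      ⟨p * w i + q * w i, by ring⟩), sgn_zero, one_smul,
    sgn_eq_sgn (show Even ((p + q) * w i + w i * p - q * w i) from ⟨w i * p, by ring⟩),
    add_comm]

end BrL

section Lift

lemma homog_lift {A : Type} [Ring A] [Algebra k A] {ℬ : ℤ → Submodule k A} [GradedAlgebra ℬ]
    (π' : R →ₐ[k] A) (hsurj : Function.Surjective π')
    (hmem : ∀ ⦃i : ℤ⦄ ⦃a : R⦄, a ∈ 𝒜 i → π' a ∈ ℬ i) {l : ℤ} {f : A} (hf : f ∈ ℬ l) :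
    ∃ r ∈ 𝒜 l, π' r = f := by
  classical
  obtain ⟨r₀, rfl⟩ := hsurj f
  refine ⟨(DirectSum.decompose 𝒜 r₀ l : R), SetLike.coe_mem _, ?_⟩
  have h1 : π' r₀ = ∑ j ∈ (DirectSum.decompose 𝒜 r₀).support,
      π' (DirectSum.decompose 𝒜 r₀ j : R) := by
    conv_lhs => rw [← DirectSum.sum_support_decompose 𝒜 r₀]
    rw [map_sum]
  have h2 := DirectSum.decompose_of_mem_same ℬ hf
  have h3 : (DirectSum.decompose ℬ (π' r₀) l : A)
      = ∑ j ∈ (DirectSum.decompose 𝒜 r₀).support,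
        (DirectSum.decompose ℬ (π' (DirectSum.decompose 𝒜 r₀ j : R)) l : A) := by
    rw [h1, DirectSum.decompose_sum, DFinsupp.finset_sum_apply, AddSubmonoidClass.coe_finset_sum]
  rw [h3] at h2
  have hterm : ∀ j ∈ (DirectSum.decompose 𝒜 r₀).support,
      (DirectSum.decompose ℬ (π' (DirectSum.decompose 𝒜 r₀ j : R)) l : A)
        = if j = l then π' (DirectSum.decompose 𝒜 r₀ j : R) else 0 := by
    intro j _
    by_cases hjl : j = l
    · subst hjl
      rw [if_pos rfl]
      exact DirectSum.decompose_of_mem_same ℬ (hmem (SetLike.coe_mem _))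
    · rw [if_neg hjl]
      exact DirectSum.decompose_of_mem_ne ℬ (hmem (SetLike.coe_mem _)) hjl
  rw [Finset.sum_congr rfl hterm, Finset.sum_ite_eq'] at h2
  by_cases hl : l ∈ (DirectSum.decompose 𝒜 r₀).support
  · rw [if_pos hl] at h2; exact h2
  · rw [DFinsupp.notMem_support_iff.1 hl]
    rw [if_neg hl] at h2
    simpa using h2

end Lift


section SABC

variable (ι : R →ₐ[k] F) (ψ : Fin n → R →ₗ[k] R) (y : Fin n → F)
variable (P : DGPoissonAlgebra k R 𝒜) {I : Submodule k R} (πe : F →ₐ[k] C)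

lemma gcommC (hgc : ∀ ⦃p q : ℤ⦄ ⦃a b : R⦄, a ∈ 𝒜 p → b ∈ 𝒜 q →
      a * b = sgn (p * q) • (b * a))
    {p q : ℤ} {a b : R} (ha : a ∈ 𝒜 p) (hb : b ∈ 𝒜 q) :
    πe (ι a) * πe (ι b) = sgn (p * q) • (πe (ι b) * πe (ι a)) := by
  rw [← map_mul, ← map_mul, ← map_mul, ← map_mul, hgc ha hb, map_zsmul, map_zsmul]

lemma psi_one (hψmul : ∀ (r : Fin n) ⦃i j : ℤ⦄ ⦃a b : R⦄, a ∈ 𝒜 i → b ∈ 𝒜 j →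
      ψ r (a * b) = a * ψ r b + sgn (i * j) • (b * ψ r a)) (α : Fin n) :
    ψ α (1 : R) = 0 := by
  have h := hψmul α (SetLike.one_mem_graded 𝒜) (SetLike.one_mem_graded 𝒜)
  simp only [one_mul, mul_one, mul_zero, sgn_zero, one_smul] at h
  exact left_eq_add.1 h

lemma psiF_one (hψmul : ∀ (r : Fin n) ⦃i j : ℤ⦄ ⦃a b : R⦄, a ∈ 𝒜 i → b ∈ 𝒜 j →
      ψ r (a * b) = a * ψ r b + sgn (i * j) • (b * ψ r a)) :
    psiF ι ψ y (1 : R) = 0 := by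
  rw [psiF_sum]
  simp [psi_one ψ hψmul]

lemma SA (hπe : IsQuotientBy k πe (idealGen k (Jgens 𝒜 P x w ι ψ y I)))
    (hx : ∀ i, x i ∈ 𝒜 (w i)) (hgen : Algebra.adjoin k (Set.range x) = ⊤) (i : Fin n) :
    ∀ r : R, πe (y i) * πe (ι r)
      = πe (ι (tw k 𝒜 (fun l => w i * l) r)) * πe (y i) + πe (ι (P.br (x i) r)) := by
  refine monomial_span hgen _ ?_ ?_ ?_ ?_
  · simp
  · intro a b ha hb
    simp only [map_add, add_mul, mul_add]
    rw [ha, hb]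
    abel
  · intro c a ha
    simp only [map_smul, smul_mul_assoc, mul_smul_comm]
    rw [ha, smul_add]
  · intro L
    induction L with
    | nil =>
      simp only [List.map_nil, List.prod_nil]
      rw [tw_of_mem k 𝒜 _ (SetLike.one_mem_graded 𝒜), br_one P (hx i)]
      simp [sgn_zero]
    | cons j t ih =>
      simp only [List.map_cons, List.prod_cons]
      have hm : (List.map x t).prod ∈ 𝒜 (List.map w t).sum := monomial_mem hx t
      set m : R := (List.map x t).prod
      set q : ℤ := (List.map w t).sum
      have htw1 : tw k 𝒜 (fun l => w i * l) (x j * m) = sgn (w i * (w j + q)) • (x j * m) :=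
        tw_of_mem k 𝒜 _ (SetLike.mul_mem_graded (hx j) hm)
      have htw2 : tw k 𝒜 (fun l => w i * l) m = sgn (w i * q) • m := tw_of_mem k 𝒜 _ hm
      calc πe (y i) * πe (ι (x j * m))
          = (πe (y i) * πe (ι (x j))) * πe (ι m) := by rw [map_mul, map_mul, mul_assoc]
        _ = sgn (w i * w j) • (πe (ι (x j)) * (πe (y i) * πe (ι m)))
              + πe (ι (P.br (x i) (x j))) * πe (ι m) := by
            rw [K4L ι ψ y P πe hπe i j, add_mul, smul_mul_assoc, mul_assoc]
        _ = sgn (w i * w j) • (πe (ι (x j)) * (sgn (w i * q) • (πe (ι m) * πe (y i))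
              + πe (ι (P.br (x i) m)))) + πe (ι (P.br (x i) (x j))) * πe (ι m) := by
            rw [ih, htw2, map_zsmul, map_zsmul, smul_mul_assoc]
        _ = πe (ι (tw k 𝒜 (fun l => w i * l) (x j * m))) * πe (y i)
              + πe (ι (P.br (x i) (x j * m))) := by
            rw [htw1, P.leibniz (hx i) (hx j) hm]
            simp only [map_add, map_zsmul, map_mul, smul_mul_assoc, mul_smul_comm, smul_add,
              mul_add, smul_smul, ← sgn_add, mul_assoc]
            abel

lemma SB (hπe : IsQuotientBy k πe (idealGen k (Jgens 𝒜 P x w ι ψ y I)))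
    (hx : ∀ i, x i ∈ 𝒜 (w i)) (hgen : Algebra.adjoin k (Set.range x) = ⊤)
    (hψx : ∀ i, ψ i (x i) = 1) (hψx' : ∀ i j, i ≠ j → ψ i (x j) = 0)
    (hψmul : ∀ (r : Fin n) ⦃i j : ℤ⦄ ⦃a b : R⦄, a ∈ 𝒜 i → b ∈ 𝒜 j →
      ψ r (a * b) = a * ψ r b + sgn (i * j) • (b * ψ r a)) (i : Fin n) :
    ∀ r : R, πe (psiF ι ψ y r) * πe (ι (x i))
      = πe (ι (x i)) * πe (psiF ι ψ y (tw k 𝒜 (fun l => w i * l) r))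
        + πe (ι (P.br r (x i))) := by
  refine monomial_span hgen _ ?_ ?_ ?_ ?_
  · simp [psiF_zero, LinearMap.map_zero₂]
  · intro a b ha hb
    simp only [psiF_add, map_add, add_mul, mul_add, LinearMap.map_add₂, LinearMap.add_apply]
    rw [ha, hb]
    abel
  · intro c a ha
    simp only [psiF_smul, map_smul, smul_mul_assoc, mul_smul_comm, LinearMap.map_smul₂,
      LinearMap.smul_apply]
    rw [ha, smul_add]
  · intro L
    induction L with
    | nil =>
      simp only [List.map_nil, List.prod_nil]
      have hb1 : P.br (1 : R) (x i) = 0 := by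
        rw [P.antisymm (SetLike.one_mem_graded 𝒜) (hx i), br_one P (hx i)]
        simp
      rw [psiF_one ι ψ y hψmul, tw_of_mem k 𝒜 _ (SetLike.one_mem_graded 𝒜), hb1, psiF_zsmul,
        psiF_one ι ψ y hψmul]
      simp
    | cons j t ih =>
      simp only [List.map_cons, List.prod_cons]
      have hm : (List.map x t).prod ∈ 𝒜 (List.map w t).sum := monomial_mem hx t
      set m : R := (List.map x t).prod
      set q : ℤ := (List.map w t).sum
      have htw1 : tw k 𝒜 (fun l => w i * l) (x j * m) = sgn (w i * (w j + q)) • (x j * m) :=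
        tw_of_mem k 𝒜 _ (SetLike.mul_mem_graded (hx j) hm)
      have htw2 : tw k 𝒜 (fun l => w i * l) m = sgn (w i * q) • m := tw_of_mem k 𝒜 _ hm
      have hpsi : psiF ι ψ y (x j * m) = ι (x j) * psiF ι ψ y m + sgn (w j * q) • (ι m * y j) := by
        rw [psiF_mul ι ψ y hψmul (hx j) hm, psiF_x ι ψ y hψx hψx' j]
      have hc1 : ∀ z : C, πe (ι (x j)) * (πe (ι (x i)) * z)
          = sgn (w j * w i) • (πe (ι (x i)) * (πe (ι (x j)) * z)) := fun z => by
        rw [← mul_assoc, gcommC ι πe P.gcomm (hx j) (hx i), smul_mul_assoc, mul_assoc]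
      have hc2 : ∀ z : C, πe (ι m) * (πe (ι (x i)) * z)
          = sgn (q * w i) • (πe (ι (x i)) * (πe (ι m) * z)) := fun z => by
        rw [← mul_assoc, gcommC ι πe P.gcomm hm (hx i), smul_mul_assoc, mul_assoc]
      have hc3 : πe (ι m) * πe (ι (P.br (x j) (x i)))
          = sgn (q * (w j + w i)) • (πe (ι (P.br (x j) (x i))) * πe (ι m)) :=
        gcommC ι πe P.gcomm hm (P.br_mem (hx j) (hx i))
      calc πe (psiF ι ψ y (x j * m)) * πe (ι (x i))
          = πe (ι (x j)) * (πe (psiF ι ψ y m) * πe (ι (x i)))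
            + sgn (w j * q) • (πe (ι m) * (πe (y j) * πe (ι (x i)))) := by
            rw [hpsi, map_add, map_mul, map_zsmul, map_mul, add_mul, smul_mul_assoc,
              mul_assoc, mul_assoc]
        _ = πe (ι (x j)) * (πe (ι (x i)) * (sgn (w i * q) • πe (psiF ι ψ y m))
              + πe (ι (P.br m (x i))))
            + sgn (w j * q) • (πe (ι m) * (sgn (w j * w i) • (πe (ι (x i)) * πe (y j))
              + πe (ι (P.br (x j) (x i))))) := by
            rw [ih, htw2, psiF_zsmul, map_zsmul, K4L ι ψ y P πe hπe j i]
        _ = πe (ι (x i)) * πe (psiF ι ψ y (tw k 𝒜 (fun l => w i * l) (x j * m)))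
            + πe (ι (P.br (x j * m) (x i))) := by
            rw [htw1, psiF_zsmul, hpsi, br_prod P (hx i) (hx j) hm]
            simp only [map_add, map_zsmul, map_mul, mul_add, add_mul, smul_add,
              smul_mul_assoc, mul_smul_comm, smul_smul, ← sgn_add, mul_assoc, hc1, hc2, hc3]
            rw [sgn_eq_sgn (show Even (w i * q + w j * w i - (w i * w j + w i * q)) from
                ⟨0, by ring⟩),
              sgn_eq_sgn (show Even (w j * q + (w j * w i + q * w i)
                - (w i * w j + w i * q + w j * q)) from ⟨0, by ring⟩),
              sgn_eq_sgn (show Even (w j * q + (q * w j + q * w i) - q * w i) from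
                ⟨w j * q, by ring⟩)]
            abel

lemma SC (hπe : IsQuotientBy k πe (idealGen k (Jgens 𝒜 P x w ι ψ y I)))
    (hx : ∀ i, x i ∈ 𝒜 (w i)) (hgen : Algebra.adjoin k (Set.range x) = ⊤)
    (hψx : ∀ i, ψ i (x i) = 1) (hψx' : ∀ i j, i ≠ j → ψ i (x j) = 0)
    (hψmul : ∀ (r : Fin n) ⦃i j : ℤ⦄ ⦃a b : R⦄, a ∈ 𝒜 i → b ∈ 𝒜 j →
      ψ r (a * b) = a * ψ r b + sgn (i * j) • (b * ψ r a)) (i : Fin n) :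
    ∀ r : R, πe (y i) * πe (psiF ι ψ y r)
      = πe (psiF ι ψ y (tw k 𝒜 (fun l => w i * l) r)) * πe (y i)
        + πe (psiF ι ψ y (P.br (x i) r)) := by
  refine monomial_span hgen _ ?_ ?_ ?_ ?_
  · simp [psiF_zero]
  · intro a b ha hb
    simp only [psiF_add, map_add, add_mul, mul_add]
    rw [ha, hb]
    abel
  · intro c a ha
    simp only [psiF_smul, map_smul, smul_mul_assoc, mul_smul_comm]
    rw [ha, smul_add]
  · intro L
    induction L with
    | nil =>
      simp only [List.map_nil, List.prod_nil]
      rw [psiF_one ι ψ y hψmul, tw_of_mem k 𝒜 _ (SetLike.one_mem_graded 𝒜),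
        br_one P (hx i), psiF_zero, psiF_zsmul, psiF_one ι ψ y hψmul]
      simp
    | cons j t ih =>
      simp only [List.map_cons, List.prod_cons]
      have hm : (List.map x t).prod ∈ 𝒜 (List.map w t).sum := monomial_mem hx t
      set m : R := (List.map x t).prod
      set q : ℤ := (List.map w t).sum
      have htw1 : tw k 𝒜 (fun l => w i * l) (x j * m) = sgn (w i * (w j + q)) • (x j * m) :=
        tw_of_mem k 𝒜 _ (SetLike.mul_mem_graded (hx j) hm)
      have htw2 : tw k 𝒜 (fun l => w i * l) m = sgn (w i * q) • m := tw_of_mem k 𝒜 _ hm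
      have hpsi : psiF ι ψ y (x j * m) = ι (x j) * psiF ι ψ y m + sgn (w j * q) • (ι m * y j) := by
        rw [psiF_mul ι ψ y hψmul (hx j) hm, psiF_x ι ψ y hψx hψx' j]
      have hpsi2 : psiF ι ψ y (P.br (x i) (x j) * m)
          = ι (P.br (x i) (x j)) * psiF ι ψ y m
            + sgn ((w i + w j) * q) • (ι m * psiF ι ψ y (P.br (x i) (x j))) :=
        psiF_mul ι ψ y hψmul (P.br_mem (hx i) (hx j)) hm
      have hpsi3 : psiF ι ψ y (x j * P.br (x i) m)
          = ι (x j) * psiF ι ψ y (P.br (x i) m)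
            + sgn (w j * (w i + q)) • (ι (P.br (x i) m) * y j) := by
        rw [psiF_mul ι ψ y hψmul (hx j) (P.br_mem (hx i) hm), psiF_x ι ψ y hψx hψx' j]
      have hSA := SA ι ψ y P πe hπe hx hgen i m
      rw [htw2, map_zsmul, map_zsmul] at hSA
      calc πe (y i) * πe (psiF ι ψ y (x j * m))
          = (πe (y i) * πe (ι (x j))) * πe (psiF ι ψ y m)
            + sgn (w j * q) • ((πe (y i) * πe (ι m)) * πe (y j)) := by
            rw [hpsi, map_add, map_mul, map_zsmul, map_mul, mul_add, mul_smul_comm,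
              ← mul_assoc, ← mul_assoc]
        _ = (sgn (w i * w j) • (πe (ι (x j)) * πe (y i)) + πe (ι (P.br (x i) (x j))))
              * πe (psiF ι ψ y m)
            + sgn (w j * q) • ((sgn (w i * q) • πe (ι m) * πe (y i)
              + πe (ι (P.br (x i) m))) * πe (y j)) := by
            rw [K4L ι ψ y P πe hπe i j, hSA]
        _ = πe (psiF ι ψ y (tw k 𝒜 (fun l => w i * l) (x j * m))) * πe (y i)
            + πe (psiF ι ψ y (P.br (x i) (x j * m))) := by
            rw [htw1, psiF_zsmul, hpsi, P.leibniz (hx i) (hx j) hm, psiF_add, psiF_zsmul,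
              hpsi2, hpsi3]
            simp only [map_add, map_zsmul, map_mul, mul_add, add_mul, smul_add,
              smul_mul_assoc, mul_smul_comm, smul_smul, ← sgn_add, mul_assoc,
              ih, K3L ι ψ y P πe hπe i j, htw2, psiF_zsmul]
            rw [sgn_eq_sgn (show Even (w j * q + (w i * q + w i * w j)
                - (w i * w j + w i * q + w j * q)) from ⟨0, by ring⟩),
              sgn_eq_sgn (show Even (w j * q + w i * q - (w i * q + w j * q)) from
                ⟨0, by ring⟩),
              sgn_eq_sgn (show Even (w j * q - (w i * w j + (w j * w i + w j * q))) from
                ⟨-(w i * w j), by ring⟩)]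
            abel

end SABC

end Main

/-- In `A^e = F(R)/J`, with `m(f + I) = f + J` and
`h(f + I) = ψ(f) + J`, for every `i` and every homogeneous `f ∈ A`:
(a) `y_i f = (-1)^{|x_i||f|} f y_i + {x_i, f}`;
(b) `h(f) x_i = (-1)^{|x_i||f|} x_i h(f) + {f, x_i}`;
(c) `y_i h(f) = (-1)^{|x_i||f|} h(f) y_i + h({x_i, f})`. -/
theorem stmt9 (k R F C A : Type) [Field k] [Ring R] [Algebra k R] [Ring F] [Algebra k F]
    [Ring C] [Algebra k C] [Ring A] [Algebra k A]
    (n : ℕ) (𝒜 : ℤ → Submodule k R) [GradedAlgebra 𝒜]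
    (ℱ : ℤ → Submodule k F) [GradedAlgebra ℱ]
    (𝒞 : ℤ → Submodule k C) [GradedAlgebra 𝒞]
    (ℬ : ℤ → Submodule k A) [GradedAlgebra ℬ]
    (P : DGPoissonAlgebra k R 𝒜)
    (x : Fin n → R) (w : Fin n → ℤ) (hx : ∀ i, x i ∈ 𝒜 (w i))
    (hgen : Algebra.adjoin k (Set.range x) = ⊤)
    (ψ : Fin n → R →ₗ[k] R)
    (hψx : ∀ i, ψ i (x i) = 1) (hψx' : ∀ i j, i ≠ j → ψ i (x j) = 0)
    (hψmem : ∀ (r : Fin n) ⦃i : ℤ⦄ ⦃a : R⦄, a ∈ 𝒜 i → ψ r a ∈ 𝒜 (i - w r))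
    (hψmul : ∀ (r : Fin n) ⦃i j : ℤ⦄ ⦃a b : R⦄, a ∈ 𝒜 i → b ∈ 𝒜 j →
      ψ r (a * b) = a * ψ r b + sgn (i * j) • (b * ψ r a))
    (ι : R →ₐ[k] F) (hι : ∀ ⦃i : ℤ⦄ ⦃a : R⦄, a ∈ 𝒜 i → ι a ∈ ℱ i)
    (y : Fin n → F) (hy : ∀ i, y i ∈ ℱ (w i))
    -- the DG Poisson ideal `I` and the quotient `A = R/I`
    (I : Submodule k R) (hI : IsDGPoissonIdeal k 𝒜 P I)
    (π' : R →ₐ[k] A) (hπ' : IsQuotientBy k π' I)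
    (hπ'mem : ∀ ⦃i : ℤ⦄ ⦃a : R⦄, a ∈ 𝒜 i → π' a ∈ ℬ i)
    (PA : DGPoissonAlgebra k A ℬ)
    (hPAd : ∀ r : R, PA.d (π' r) = π' (P.d r))
    (hPAbr : ∀ r s : R, PA.br (π' r) (π' s) = π' (P.br r s))
    -- the quotient `A^e = F(R)/J`
    (πe : F →ₐ[k] C) (hπe : IsQuotientBy k πe (idealGen k (Jgens 𝒜 P x w ι ψ y I)))
    (hπemem : ∀ ⦃i : ℤ⦄ ⦃u : F⦄, u ∈ ℱ i → πe u ∈ 𝒞 i)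
    -- the structure maps `m` and `h`
    (m : A →ₐ[k] C) (hm : ∀ r : R, m (π' r) = πe (ι r))
    (h : A →ₗ[k] C) (hh : ∀ r : R, h (π' r) = πe (psiF ι ψ y r)) :
    ∀ (i : Fin n) ⦃l : ℤ⦄ ⦃f : A⦄, f ∈ ℬ l →
      (πe (y i) * m f = sgn (w i * l) • (m f * πe (y i))
          + m (PA.br (π' (x i)) f)) ∧
      (h f * m (π' (x i)) = sgn (w i * l) • (m (π' (x i)) * h f)
          + m (PA.br f (π' (x i)))) ∧
      (πe (y i) * h f = sgn (w i * l) • (h f * πe (y i))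
          + h (PA.br (π' (x i)) f)) := by
  intro i l f hf
  obtain ⟨r, hr, rfl⟩ := homog_lift π' hπ'.surj hπ'mem hf
  have htw : tw k 𝒜 (fun l' => w i * l') r = sgn (w i * l) • r := tw_of_mem k 𝒜 _ hr
  refine ⟨?_, ?_, ?_⟩
  · have hA := SA ι ψ y P πe hπe hx hgen i r
    rw [htw, map_zsmul, map_zsmul, smul_mul_assoc] at hA
    rw [hm r, hPAbr, hm]
    exact hA
  · have hB := SB ι ψ y P πe hπe hx hgen hψx hψx' hψmul i r
    rw [htw, psiF_zsmul, map_zsmul, mul_smul_comm] at hB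
    rw [hh r, hm (x i), hPAbr r (x i), hm]
    exact hB
  · have hC := SC ι ψ y P πe hπe hx hgen hψx hψx' hψmul i r
    rw [htw, psiF_zsmul, map_zsmul, smul_mul_assoc] at hC
    rw [hh r, hPAbr, hh]
    exact hC
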